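/- arXiv:math/0301330 — 2 statements merged into one kernel-verified Lean document; each statement's English description precedes it below -/
import Mathlib

section
/- Let τ ∈ ℝ_{<0} and let z ∈ ℂ with |Re(z)| < 1 − τ^{-1}. Then the function y ↦ (1/y)·( z/y − sinh(τyz)/(sinh(y)·sinh(τy)) ) is absolutely integrable on (0,∞); consequently γ_τ(z) := (1/(2i))·∫_0^∞ ( z/y − sinh(τyz)/(sinh(y)·sinh(τy)) ) dy/y is well defined, and z ↦ G_τ(z) := exp(i·γ_τ(z)) is analytic on the strip {z ∈ ℂ : |Re(z)| < 1 − τ^{-1}}. -/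
noncomputable section

open Complex MeasureTheory Set

/-- The integrand `(1/y)·( z/y − sinh(τyz)/(sinh(y)·sinh(τy)) )` in Ruijsenaars'
hyperbolic gamma function. -/
def hypInt (τ : ℝ) (z : ℂ) (y : ℝ) : ℂ :=
  (z / (y : ℂ) -
      Complex.sinh ((τ : ℂ) * (y : ℂ) * z) /
        (Complex.sinh (y : ℂ) * Complex.sinh ((τ : ℂ) * (y : ℂ)))) / (y : ℂ)

/-- `γ_τ(z) = (1/(2i))·∫_0^∞ ( z/y − sinh(τyz)/(sinh(y)·sinh(τy)) ) dy/y`. -/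
def hypGammaArg (τ : ℝ) (z : ℂ) : ℂ :=
  (2 * Complex.I)⁻¹ * ∫ y in Set.Ioi (0 : ℝ), hypInt τ z y

/-- `G_τ(z) = exp(i·γ_τ(z))` on the strip `|Re z| < 1 − τ⁻¹`. -/
def hypGammaStrip (τ : ℝ) (z : ℂ) : ℂ := Complex.exp (Complex.I * hypGammaArg τ z)

namespace Complex

/-- Compatibility: the complex absolute value as a bundled absolute value (the norm). -/
def abs : AbsoluteValue ℂ ℝ where
  toFun := fun z => ‖z‖
  map_mul' := norm_mul
  nonneg' := norm_nonneg
  eq_zero' := fun _ => norm_eq_zero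
  add_le' := norm_add_le

theorem norm_eq_abs (z : ℂ) : ‖z‖ = Complex.abs z := rfl

theorem abs_ofReal (x : ℝ) : Complex.abs (x : ℂ) = |x| := by
  rw [← norm_eq_abs, Complex.norm_real, Real.norm_eq_abs]

theorem abs_two : Complex.abs 2 = 2 := Complex.norm_two

theorem abs_exp (z : ℂ) : Complex.abs (Complex.exp z) = Real.exp z.re := Complex.norm_exp z

theorem abs_exp_sub_one_sub_id_le {x : ℂ} (hx : Complex.abs x ≤ 1) :
    Complex.abs (Complex.exp x - 1 - x) ≤ Complex.abs x ^ 2 :=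
  Complex.norm_exp_sub_one_sub_id_le hx

theorem abs_re_le_abs (z : ℂ) : |z.re| ≤ Complex.abs z := Complex.abs_re_le_norm z

end Complex

lemma sinh_sub_self_bound {w : ℂ} (hw : Complex.abs w ≤ 1) :
    Complex.abs (Complex.sinh w - w) ≤ Complex.abs w ^ 3 := by
  have h1 := Complex.exp_bound hw (n := 3) (by norm_num)
  have hw' : Complex.abs (-w) ≤ 1 := by rwa [map_neg_eq_map]
  have h2 := Complex.exp_bound hw' (n := 3) (by norm_num)
  have e1 : ∑ m ∈ Finset.range 3, w ^ m / m.factorial = 1 + w + w^2/2 := by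
    simp [Finset.sum_range_succ]
  have e2 : ∑ m ∈ Finset.range 3, (-w) ^ m / m.factorial = 1 - w + w^2/2 := by
    simp [Finset.sum_range_succ]; ring
  rw [e1] at h1; rw [e2, norm_neg] at h2
  have key : Complex.sinh w - w =
      ((Complex.exp w - (1 + w + w^2/2)) - (Complex.exp (-w) - (1 - w + w^2/2))) / 2 := by
    rw [Complex.sinh]; ring
  rw [key]
  calc Complex.abs (((Complex.exp w - (1 + w + w^2/2)) - (Complex.exp (-w) - (1 - w + w^2/2))) / 2)
      ≤ (Complex.abs (Complex.exp w - (1 + w + w^2/2))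
        + Complex.abs (Complex.exp (-w) - (1 - w + w^2/2))) / 2 := by
        rw [map_div₀]; simp only [Complex.abs_two]
        gcongr; exact AbsoluteValue.sub_le_add _ _ _
    _ ≤ (Complex.abs w ^ 3 * (4 * ((6:ℝ) * 3)⁻¹) + Complex.abs w ^ 3 * (4 * ((6:ℝ) * 3)⁻¹)) / 2 := by
        gcongr
        · simpa [Nat.factorial, Complex.norm_eq_abs] using h1
        · simpa [Nat.factorial, Complex.norm_eq_abs] using h2
    _ ≤ Complex.abs w ^ 3 := by nlinarith [pow_nonneg (Complex.abs.nonneg w) 3]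

lemma cosh_sub_one_bound {w : ℂ} (hw : Complex.abs w ≤ 1) :
    Complex.abs (Complex.cosh w - 1) ≤ Complex.abs w ^ 2 := by
  have hw' : Complex.abs (-w) ≤ 1 := by rwa [map_neg_eq_map]
  have h1 := Complex.abs_exp_sub_one_sub_id_le hw
  have h2 := Complex.abs_exp_sub_one_sub_id_le hw'
  rw [map_neg_eq_map] at h2
  have key : Complex.cosh w - 1 =
      ((Complex.exp w - 1 - w) + (Complex.exp (-w) - 1 - (-w))) / 2 := by
    rw [Complex.cosh]; ring
  rw [key, map_div₀]
  simp only [Complex.abs_two]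
  calc Complex.abs ((Complex.exp w - 1 - w) + (Complex.exp (-w) - 1 - (-w))) / 2
      ≤ (Complex.abs w ^ 2 + Complex.abs w ^ 2) / 2 := by
        gcongr
        exact (Complex.abs.add_le _ _).trans (by gcongr)
    _ = Complex.abs w ^ 2 := by ring

lemma abs_sinh_le_exp (w : ℂ) : Complex.abs (Complex.sinh w) ≤ Real.exp |w.re| := by
  rw [Complex.sinh, map_div₀, Complex.abs_two]
  have h1 : Complex.abs (Complex.exp w) = Real.exp w.re := Complex.abs_exp w
  have h2 : Complex.abs (Complex.exp (-w)) = Real.exp (-w.re) := by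
    rw [Complex.abs_exp]; simp
  calc Complex.abs (Complex.exp w - Complex.exp (-w)) / 2
      ≤ (Real.exp w.re + Real.exp (-w.re)) / 2 := by
        gcongr
        exact (Complex.abs.sub_le_add _ _).trans (by rw [h1, h2])
    _ ≤ Real.exp |w.re| := by
        have a1 : Real.exp w.re ≤ Real.exp |w.re| := Real.exp_le_exp.2 (le_abs_self _)
        have a2 : Real.exp (-w.re) ≤ Real.exp |w.re| := Real.exp_le_exp.2 (neg_le_abs _)
        linarith

lemma abs_cosh_le_exp (w : ℂ) : Complex.abs (Complex.cosh w) ≤ Real.exp |w.re| := by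
  rw [Complex.cosh, map_div₀, Complex.abs_two]
  have h1 : Complex.abs (Complex.exp w) = Real.exp w.re := Complex.abs_exp w
  have h2 : Complex.abs (Complex.exp (-w)) = Real.exp (-w.re) := by
    rw [Complex.abs_exp]; simp
  calc Complex.abs (Complex.exp w + Complex.exp (-w)) / 2
      ≤ (Real.exp w.re + Real.exp (-w.re)) / 2 := by
        gcongr
        exact (Complex.abs.add_le _ _).trans (by rw [h1, h2])
    _ ≤ Real.exp |w.re| := by
        have a1 : Real.exp w.re ≤ Real.exp |w.re| := Real.exp_le_exp.2 (le_abs_self _)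
        have a2 : Real.exp (-w.re) ≤ Real.exp |w.re| := Real.exp_le_exp.2 (neg_le_abs _)
        linarith

lemma sinh_lower {δ y : ℝ} (hδ : 0 < δ) (hy : δ ≤ y) :
    (1 - Real.exp (-(2*δ)))/2 * Real.exp y ≤ Real.sinh y := by
  rw [Real.sinh_eq]
  have h1 : Real.exp (-y) ≤ Real.exp (-(2*δ)) * Real.exp y := by
    rw [← Real.exp_add]
    exact Real.exp_le_exp.2 (by linarith)
  nlinarith [Real.exp_pos y, Real.exp_pos (-(2*δ))]

def hypDeriv (τ : ℝ) (z : ℂ) (y : ℝ) : ℂ :=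
  (1 / (y : ℂ) -
      (τ : ℂ) * (y : ℂ) * Complex.cosh ((τ : ℂ) * (y : ℂ) * z) /
        (Complex.sinh (y : ℂ) * Complex.sinh ((τ : ℂ) * (y : ℂ)))) / (y : ℂ)

lemma csinh_real_ne_zero {x : ℝ} (hx : x ≠ 0) : Complex.sinh (x : ℂ) ≠ 0 := by
  rw [← Complex.ofReal_sinh]
  exact Complex.ofReal_ne_zero.2 (Real.sinh_ne_zero.2 hx)

lemma hypInt_eq (τ : ℝ) (z : ℂ) {y : ℝ} (hτ : τ ≠ 0) (hy : y ≠ 0) :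
    hypInt τ z y =
      (z * Complex.sinh (y : ℂ) * Complex.sinh ((τ : ℂ) * y) -
        (y : ℂ) * Complex.sinh ((τ : ℂ) * y * z)) /
      ((y : ℂ)^2 * (Complex.sinh (y : ℂ) * Complex.sinh ((τ : ℂ) * y))) := by
  have h1 : Complex.sinh (y : ℂ) ≠ 0 := csinh_real_ne_zero hy
  have h2 : Complex.sinh ((τ : ℂ) * y) ≠ 0 := by
    rw [show ((τ : ℂ) * y) = ((τ * y : ℝ) : ℂ) by push_cast; ring]
    exact csinh_real_ne_zero (mul_ne_zero hτ hy)
  have hy' : (y : ℂ) ≠ 0 := Complex.ofReal_ne_zero.2 hy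
  rw [hypInt]
  field_simp
  rw [sub_div, mul_comm (y:ℂ) (τ:ℂ), mul_div_cancel_right₀ _ h2]

lemma hypDeriv_eq (τ : ℝ) (z : ℂ) {y : ℝ} (hτ : τ ≠ 0) (hy : y ≠ 0) :
    hypDeriv τ z y =
      (Complex.sinh (y : ℂ) * Complex.sinh ((τ : ℂ) * y) -
        (τ : ℂ) * (y : ℂ)^2 * Complex.cosh ((τ : ℂ) * y * z)) /
      ((y : ℂ)^2 * (Complex.sinh (y : ℂ) * Complex.sinh ((τ : ℂ) * y))) := by
  have h1 : Complex.sinh (y : ℂ) ≠ 0 := csinh_real_ne_zero hy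
  have h2 : Complex.sinh ((τ : ℂ) * y) ≠ 0 := by
    rw [show ((τ : ℂ) * y) = ((τ * y : ℝ) : ℂ) by push_cast; ring]
    exact csinh_real_ne_zero (mul_ne_zero hτ hy)
  have hy' : (y : ℂ) ≠ 0 := Complex.ofReal_ne_zero.2 hy
  rw [hypDeriv]
  field_simp
  rw [sub_div, mul_comm (y:ℂ) (τ:ℂ), mul_div_cancel_right₀ _ h2]

lemma hypInt_hasDerivAt (τ : ℝ) (z : ℂ) (y : ℝ) :
    HasDerivAt (fun z => hypInt τ z y) (hypDeriv τ z y) z := by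
  have h1 : HasDerivAt (fun z : ℂ => z / (y : ℂ)) (1 / (y : ℂ)) z := by
    simpa using (hasDerivAt_id z).div_const (y : ℂ)
  have h2 : HasDerivAt (fun z : ℂ => Complex.sinh ((τ : ℂ) * y * z))
      ((τ : ℂ) * y * Complex.cosh ((τ : ℂ) * y * z)) z := by
    have hlin : HasDerivAt (fun w : ℂ => (τ : ℂ) * (y : ℂ) * w) ((τ : ℂ) * (y : ℂ)) z := by
      simpa using (hasDerivAt_id z).const_mul ((τ : ℂ) * (y : ℂ))
    have := (Complex.hasDerivAt_sinh ((τ : ℂ) * (y : ℂ) * z)).comp z hlin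
    simpa [Function.comp_def, mul_comm] using this
  have h3 := (h1.sub (h2.div_const (Complex.sinh (y : ℂ) * Complex.sinh ((τ : ℂ) * y)))).div_const (y : ℂ)
  simpa [hypInt, hypDeriv, sub_div] using h3

lemma contOn_hypInt (τ : ℝ) (z : ℂ) (hτ : τ ≠ 0) :
    ContinuousOn (hypInt τ z) (Ioi (0:ℝ)) := by
  apply ContinuousOn.div
  · apply ContinuousOn.sub
    · exact (continuousOn_const.div (Complex.continuous_ofReal.continuousOn)
        (fun y hy => Complex.ofReal_ne_zero.2 (ne_of_gt hy)))
    · apply ContinuousOn.div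
      · exact (Complex.continuous_sinh.comp
          ((continuous_const.mul Complex.continuous_ofReal).mul continuous_const)).continuousOn
      · exact ((Complex.continuous_sinh.comp Complex.continuous_ofReal).mul
          (Complex.continuous_sinh.comp (continuous_const.mul Complex.continuous_ofReal))).continuousOn
      · intro y hy
        have h1 : Complex.sinh (y : ℂ) ≠ 0 := csinh_real_ne_zero (ne_of_gt hy)
        have h2 : Complex.sinh ((τ : ℂ) * y) ≠ 0 := by
          rw [show ((τ : ℂ) * y) = ((τ * y : ℝ) : ℂ) by push_cast; ring]
          exact csinh_real_ne_zero (mul_ne_zero hτ (ne_of_gt hy))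
        exact mul_ne_zero h1 h2
  · exact Complex.continuous_ofReal.continuousOn
  · intro y hy; exact Complex.ofReal_ne_zero.2 (ne_of_gt hy)

lemma contOn_hypDeriv (τ : ℝ) (z : ℂ) (hτ : τ ≠ 0) :
    ContinuousOn (hypDeriv τ z) (Ioi (0:ℝ)) := by
  apply ContinuousOn.div
  · apply ContinuousOn.sub
    · exact (continuousOn_const.div (Complex.continuous_ofReal.continuousOn)
        (fun y hy => Complex.ofReal_ne_zero.2 (ne_of_gt hy)))
    · apply ContinuousOn.div
      · exact ((continuous_const.mul Complex.continuous_ofReal).mul (Complex.continuous_cosh.comp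
          ((continuous_const.mul Complex.continuous_ofReal).mul continuous_const))).continuousOn
      · exact ((Complex.continuous_sinh.comp Complex.continuous_ofReal).mul
          (Complex.continuous_sinh.comp (continuous_const.mul Complex.continuous_ofReal))).continuousOn
      · intro y hy
        have h1 : Complex.sinh (y : ℂ) ≠ 0 := csinh_real_ne_zero (ne_of_gt hy)
        have h2 : Complex.sinh ((τ : ℂ) * y) ≠ 0 := by
          rw [show ((τ : ℂ) * y) = ((τ * y : ℝ) : ℂ) by push_cast; ring]
          exact csinh_real_ne_zero (mul_ne_zero hτ (ne_of_gt hy))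
        exact mul_ne_zero h1 h2
  · exact Complex.continuous_ofReal.continuousOn
  · intro y hy; exact Complex.ofReal_ne_zero.2 (ne_of_gt hy)

lemma denom_lower {τ : ℝ} (hτ : τ < 0) {y : ℝ} (hy : 0 < y) :
    (-τ) * y^4 ≤ Complex.abs ((y:ℂ)^2 * (Complex.sinh (y:ℂ) * Complex.sinh ((τ:ℂ)*y))) := by
  have hcast : ((τ:ℂ) * y) = ((τ * y : ℝ) : ℂ) := by push_cast; ring
  rw [map_mul, map_mul, map_pow, Complex.abs_ofReal, ← Complex.ofReal_sinh, hcast,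
    ← Complex.ofReal_sinh, Complex.abs_ofReal, Complex.abs_ofReal]
  have h1 : y ≤ Real.sinh y := Real.self_le_sinh_iff.2 hy.le
  have h2 : -τ * y ≤ |Real.sinh (τ * y)| := by
    rw [Real.abs_sinh]
    have : |τ * y| = -τ * y := by
      rw [abs_of_nonpos (mul_nonpos_iff.2 (Or.inr ⟨hτ.le, hy.le⟩))]; ring
    rw [this]
    exact Real.self_le_sinh_iff.2 (mul_nonneg (neg_nonneg.2 hτ.le) hy.le)
  have h3 : |Real.sinh y| = Real.sinh y := abs_of_nonneg (by positivity)
  rw [h3]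
  have hy2 : |y|^2 = y^2 := by rw [abs_of_pos hy]
  rw [hy2]
  calc (-τ) * y^4 = y^2 * (y * (-τ * y)) := by ring
    _ ≤ y^2 * (Real.sinh y * |Real.sinh (τ * y)|) := by
        apply mul_le_mul_of_nonneg_left _ (by positivity)
        exact mul_le_mul h1 h2 (mul_nonneg (neg_nonneg.2 hτ.le) hy.le) (le_trans hy.le h1)

lemma hypInt_bound_zero {τ : ℝ} (hτ : τ < 0) {z : ℂ} {R y : ℝ}
    (hR : Complex.abs z ≤ R) (hy : 0 < y) (hy1 : y ≤ 1)
    (hy2 : (-τ) * (y * (R + 1)) ≤ 1) :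
    Complex.abs (hypInt τ z y) ≤ (R * (2 * (-τ)^3 + (-τ)) + (-τ)^3 * R^3) / (-τ) := by
  set σ := -τ with hσdef
  have hσ : 0 < σ := neg_pos.2 hτ
  have hR0 : 0 ≤ R := le_trans (Complex.abs.nonneg z) hR
  have hR1 : (1:ℝ) ≤ R + 1 := by linarith
  have hσy : σ * y ≤ 1 := by nlinarith
  have hσyR : σ * y * R ≤ 1 := by nlinarith
  -- error terms
  set e₁ := Complex.sinh (y:ℂ) - (y:ℂ) with he₁def
  set e₂ := Complex.sinh ((τ:ℂ)*y) - (τ:ℂ)*y with he₂def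
  set e₃ := Complex.sinh ((τ:ℂ)*y*z) - (τ:ℂ)*y*z with he₃def
  have hay : Complex.abs (y:ℂ) = y := by rw [Complex.abs_ofReal, abs_of_pos hy]
  have haτy : Complex.abs ((τ:ℂ)*y) = σ * y := by
    rw [map_mul, Complex.abs_ofReal, Complex.abs_ofReal, abs_of_neg hτ, abs_of_pos hy]
  have haτyz : Complex.abs ((τ:ℂ)*y*z) ≤ σ * y * R := by
    rw [map_mul, haτy]
    exact mul_le_mul_of_nonneg_left hR (by positivity)
  have he₁ : Complex.abs e₁ ≤ y^3 := by
    have := sinh_sub_self_bound (w := (y:ℂ)) (by rw [hay]; exact hy1)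
    rwa [hay] at this
  have he₂ : Complex.abs e₂ ≤ (σ*y)^3 := by
    have := sinh_sub_self_bound (w := (τ:ℂ)*y) (by rw [haτy]; exact hσy)
    rwa [haτy] at this
  have he₃ : Complex.abs e₃ ≤ (σ*y*R)^3 := by
    have h := sinh_sub_self_bound (w := (τ:ℂ)*y*z) (le_trans haτyz hσyR)
    refine h.trans ?_
    exact pow_le_pow_left₀ (Complex.abs.nonneg _) haτyz 3
  -- numerator identity
  have hN : z * Complex.sinh (y : ℂ) * Complex.sinh ((τ : ℂ) * y) -
        (y : ℂ) * Complex.sinh ((τ : ℂ) * y * z)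
      = z * ((y:ℂ)*e₂ + (τ:ℂ)*(y:ℂ)*e₁ + e₁*e₂) - (y:ℂ)*e₃ := by
    rw [he₁def, he₂def, he₃def]; ring
  have hNabs : Complex.abs (z * Complex.sinh (y : ℂ) * Complex.sinh ((τ : ℂ) * y) -
        (y : ℂ) * Complex.sinh ((τ : ℂ) * y * z))
      ≤ y^4 * (R * (2*σ^3 + σ) + σ^3 * R^3) := by
    rw [hN]
    have step1 : Complex.abs (z * ((y:ℂ)*e₂ + (τ:ℂ)*(y:ℂ)*e₁ + e₁*e₂) - (y:ℂ)*e₃)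
        ≤ Complex.abs z * (Complex.abs ((y:ℂ)*e₂) + Complex.abs ((τ:ℂ)*(y:ℂ)*e₁)
            + Complex.abs (e₁*e₂)) + Complex.abs ((y:ℂ)*e₃) := by
      refine (Complex.abs.sub_le_add _ _).trans ?_
      gcongr
      rw [map_mul]
      exact mul_le_mul_of_nonneg_left
        ((Complex.abs.add_le _ _).trans (by gcongr; exact Complex.abs.add_le _ _))
        (Complex.abs.nonneg z)
    refine step1.trans ?_
    have b1 : Complex.abs ((y:ℂ)*e₂) ≤ y * (σ*y)^3 := by
      rw [map_mul, hay]; exact mul_le_mul_of_nonneg_left he₂ hy.le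
    have b2 : Complex.abs ((τ:ℂ)*(y:ℂ)*e₁) ≤ σ*y * y^3 := by
      rw [map_mul, haτy]; exact mul_le_mul_of_nonneg_left he₁ (by positivity)
    have b3 : Complex.abs (e₁*e₂) ≤ y^3 * (σ*y)^3 := by
      rw [map_mul]
      exact mul_le_mul he₁ he₂ (Complex.abs.nonneg _) (by positivity)
    have b4 : Complex.abs ((y:ℂ)*e₃) ≤ y * (σ*y*R)^3 := by
      rw [map_mul, hay]; exact mul_le_mul_of_nonneg_left he₃ hy.le
    have habs : Complex.abs z * (Complex.abs ((y:ℂ)*e₂) + Complex.abs ((τ:ℂ)*(y:ℂ)*e₁)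
            + Complex.abs (e₁*e₂)) + Complex.abs ((y:ℂ)*e₃)
        ≤ R * (y*(σ*y)^3 + σ*y*y^3 + y^3*(σ*y)^3) + y*(σ*y*R)^3 := by
      gcongr
    refine habs.trans ?_
    have hy4 : y^6 ≤ y^4 := pow_le_pow_of_le_one hy.le hy1 (by norm_num)
    nlinarith [mul_nonneg (mul_nonneg hR0 (pow_nonneg hσ.le 3)) (sub_nonneg.2 hy4)]
  -- conclude
  rw [hypInt_eq τ z hτ.ne hy.ne', map_div₀]
  have hD := denom_lower hτ hy
  have hDpos : 0 < σ * y^4 := by positivity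
  calc Complex.abs _ / Complex.abs ((y:ℂ)^2 * (Complex.sinh (y:ℂ) * Complex.sinh ((τ:ℂ)*y)))
      ≤ (y^4 * (R * (2*σ^3 + σ) + σ^3 * R^3)) / (σ * y^4) := by
        apply div_le_div₀ (by positivity) hNabs hDpos hD
    _ = (R * (2*σ^3 + σ) + σ^3 * R^3) / σ := by
        field_simp

lemma hypDeriv_bound_zero {τ : ℝ} (hτ : τ < 0) {z : ℂ} {R y : ℝ}
    (hR : Complex.abs z ≤ R) (hy : 0 < y) (hy1 : y ≤ 1)
    (hy2 : (-τ) * (y * (R + 1)) ≤ 1) :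
    Complex.abs (hypDeriv τ z y) ≤ (2 * (-τ)^3 + (-τ) + (-τ)^3 * R^2) / (-τ) := by
  set σ := -τ with hσdef
  have hσ : 0 < σ := neg_pos.2 hτ
  have hR0 : 0 ≤ R := le_trans (Complex.abs.nonneg z) hR
  have hR1 : (1:ℝ) ≤ R + 1 := by linarith
  have hσy : σ * y ≤ 1 := by nlinarith
  have hσyR : σ * y * R ≤ 1 := by nlinarith
  set e₁ := Complex.sinh (y:ℂ) - (y:ℂ) with he₁def
  set e₂ := Complex.sinh ((τ:ℂ)*y) - (τ:ℂ)*y with he₂def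
  set e₄ := Complex.cosh ((τ:ℂ)*y*z) - 1 with he₄def
  have hay : Complex.abs (y:ℂ) = y := by rw [Complex.abs_ofReal, abs_of_pos hy]
  have haτy : Complex.abs ((τ:ℂ)*y) = σ * y := by
    rw [map_mul, Complex.abs_ofReal, Complex.abs_ofReal, abs_of_neg hτ, abs_of_pos hy]
  have haτyz : Complex.abs ((τ:ℂ)*y*z) ≤ σ * y * R := by
    rw [map_mul, haτy]
    exact mul_le_mul_of_nonneg_left hR (by positivity)
  have he₁ : Complex.abs e₁ ≤ y^3 := by
    have := sinh_sub_self_bound (w := (y:ℂ)) (by rw [hay]; exact hy1)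
    rwa [hay] at this
  have he₂ : Complex.abs e₂ ≤ (σ*y)^3 := by
    have := sinh_sub_self_bound (w := (τ:ℂ)*y) (by rw [haτy]; exact hσy)
    rwa [haτy] at this
  have he₄ : Complex.abs e₄ ≤ (σ*y*R)^2 := by
    have h := cosh_sub_one_bound (w := (τ:ℂ)*y*z) (le_trans haτyz hσyR)
    exact h.trans (pow_le_pow_left₀ (Complex.abs.nonneg _) haτyz 2)
  have hM : Complex.sinh (y : ℂ) * Complex.sinh ((τ : ℂ) * y) -
        (τ : ℂ) * (y : ℂ)^2 * Complex.cosh ((τ : ℂ) * y * z)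
      = (y:ℂ)*e₂ + (τ:ℂ)*(y:ℂ)*e₁ + e₁*e₂ - (τ:ℂ)*(y:ℂ)^2*e₄ := by
    rw [he₁def, he₂def, he₄def]; ring
  have hMabs : Complex.abs (Complex.sinh (y : ℂ) * Complex.sinh ((τ : ℂ) * y) -
        (τ : ℂ) * (y : ℂ)^2 * Complex.cosh ((τ : ℂ) * y * z))
      ≤ y^4 * (2*σ^3 + σ + σ^3 * R^2) := by
    rw [hM]
    have b1 : Complex.abs ((y:ℂ)*e₂) ≤ y * (σ*y)^3 := by
      rw [map_mul, hay]; exact mul_le_mul_of_nonneg_left he₂ hy.le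
    have b2 : Complex.abs ((τ:ℂ)*(y:ℂ)*e₁) ≤ σ*y * y^3 := by
      rw [map_mul, haτy]; exact mul_le_mul_of_nonneg_left he₁ (by positivity)
    have b3 : Complex.abs (e₁*e₂) ≤ y^3 * (σ*y)^3 := by
      rw [map_mul]
      exact mul_le_mul he₁ he₂ (Complex.abs.nonneg _) (by positivity)
    have b4 : Complex.abs ((τ:ℂ)*(y:ℂ)^2*e₄) ≤ σ*y^2 * (σ*y*R)^2 := by
      rw [map_mul, map_mul, map_pow, hay, Complex.abs_ofReal, abs_of_neg hτ]
      exact mul_le_mul_of_nonneg_left he₄ (by positivity)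
    have step : Complex.abs ((y:ℂ)*e₂ + (τ:ℂ)*(y:ℂ)*e₁ + e₁*e₂ - (τ:ℂ)*(y:ℂ)^2*e₄)
        ≤ Complex.abs ((y:ℂ)*e₂) + Complex.abs ((τ:ℂ)*(y:ℂ)*e₁) + Complex.abs (e₁*e₂)
          + Complex.abs ((τ:ℂ)*(y:ℂ)^2*e₄) := by
      refine (Complex.abs.sub_le_add _ _).trans ?_
      gcongr
      exact (Complex.abs.add_le _ _).trans (by gcongr; exact Complex.abs.add_le _ _)
    refine step.trans ?_
    have hy4 : y^6 ≤ y^4 := pow_le_pow_of_le_one hy.le hy1 (by norm_num)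
    have hRy : σ*y^2*(σ*y*R)^2 ≤ σ^3 * R^2 * y^4 := by nlinarith [sq_nonneg (σ*y*R)]
    nlinarith [mul_nonneg (pow_nonneg hσ.le 3) (sub_nonneg.2 hy4), b1, b2, b3, b4]
  rw [hypDeriv_eq τ z hτ.ne hy.ne', map_div₀]
  have hD := denom_lower hτ hy
  have hDpos : 0 < σ * y^4 := by positivity
  calc Complex.abs _ / Complex.abs ((y:ℂ)^2 * (Complex.sinh (y:ℂ) * Complex.sinh ((τ:ℂ)*y)))
      ≤ (y^4 * (2*σ^3 + σ + σ^3 * R^2)) / (σ * y^4) := by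
        apply div_le_div₀ (by positivity) hMabs hDpos hD
    _ = (2*σ^3 + σ + σ^3 * R^2) / σ := by
        field_simp

lemma hypInt_bound_infty {τ : ℝ} (hτ : τ < 0) {z : ℂ} {b R δ y : ℝ}
    (hb : |z.re| ≤ b) (hR : Complex.abs z ≤ R) (hδ : 0 < δ) (hy : δ ≤ y) :
    Complex.abs (hypInt τ z y) ≤ R / y^2 +
      (1/(δ * ((1 - Real.exp (-(2*δ)))/2) * ((1 - Real.exp (-(2*(-τ*δ))))/2))) *
        Real.exp (-((1 + -τ - -τ*b) * y)) := by
  set σ := -τ with hσdef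
  have hσ : 0 < σ := neg_pos.2 hτ
  have hy0 : 0 < y := lt_of_lt_of_le hδ hy
  have hb0 : 0 ≤ b := le_trans (abs_nonneg _) hb
  set c₁ := (1 - Real.exp (-(2*δ)))/2 with hc₁def
  set c₂ := (1 - Real.exp (-(2*(σ*δ))))/2 with hc₂def
  have hc₁ : 0 < c₁ := by
    rw [hc₁def]
    have : Real.exp (-(2*δ)) < 1 := Real.exp_lt_one_iff.2 (by linarith)
    linarith
  have hc₂ : 0 < c₂ := by
    rw [hc₂def]
    have : Real.exp (-(2*(σ*δ))) < 1 := Real.exp_lt_one_iff.2 (by nlinarith)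
    linarith
  have hS₁ : c₁ * Real.exp y ≤ Real.sinh y := sinh_lower hδ hy
  have hS₂ : c₂ * Real.exp (σ*y) ≤ |Real.sinh (τ*y)| := by
    rw [Real.abs_sinh]
    have habs : |τ*y| = σ*y := by
      rw [abs_of_nonpos (mul_nonpos_iff.2 (Or.inr ⟨hτ.le, hy0.le⟩))]; ring
    rw [habs]
    exact sinh_lower (by positivity) (by nlinarith)
  -- split
  have hsplit : hypInt τ z y = (z / (y:ℂ)) / (y:ℂ) -
      (Complex.sinh ((τ:ℂ)*(y:ℂ)*z) / (Complex.sinh (y:ℂ) * Complex.sinh ((τ:ℂ)*(y:ℂ)))) / (y:ℂ) := by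
    rw [hypInt, sub_div]
  rw [hsplit]
  refine (Complex.abs.sub_le_add _ _).trans ?_
  have hay : Complex.abs (y:ℂ) = y := by rw [Complex.abs_ofReal, abs_of_pos hy0]
  have term1 : Complex.abs ((z / (y:ℂ)) / (y:ℂ)) ≤ R / y^2 := by
    rw [map_div₀, map_div₀, hay]
    rw [div_div, ← sq]
    exact div_le_div_of_nonneg_right hR (by positivity)
  have hre : ((τ:ℂ)*(y:ℂ)*z).re = (τ*y) * z.re := by
    rw [show ((τ:ℂ)*(y:ℂ)) = ((τ*y : ℝ):ℂ) by push_cast; ring, Complex.re_ofReal_mul]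
  have hnum : Complex.abs (Complex.sinh ((τ:ℂ)*(y:ℂ)*z)) ≤ Real.exp (σ*b*y) := by
    refine (abs_sinh_le_exp _).trans ?_
    apply Real.exp_le_exp.2
    rw [hre, abs_mul]
    have h1 : |τ*y| = σ*y := by
      rw [abs_of_nonpos (mul_nonpos_iff.2 (Or.inr ⟨hτ.le, hy0.le⟩))]; ring
    rw [h1]
    calc σ*y*|z.re| ≤ σ*y*b := by
          exact mul_le_mul_of_nonneg_left hb (by positivity)
      _ = σ*b*y := by ring
  have hden : (c₁ * Real.exp y) * (c₂ * Real.exp (σ*y)) * y ≤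
      Complex.abs (Complex.sinh (y:ℂ) * Complex.sinh ((τ:ℂ)*(y:ℂ))) * y := by
    apply mul_le_mul_of_nonneg_right _ hy0.le
    rw [map_mul, ← Complex.ofReal_sinh,
      show ((τ:ℂ)*(y:ℂ)) = ((τ*y : ℝ):ℂ) by push_cast; ring, ← Complex.ofReal_sinh,
      Complex.abs_ofReal, Complex.abs_ofReal, _root_.abs_of_nonneg (le_trans (by positivity : (0:ℝ) ≤ c₁ * Real.exp y) hS₁)]
    exact mul_le_mul hS₁ hS₂ (by positivity) (by positivity)
  have hdenpos : 0 < (c₁ * Real.exp y) * (c₂ * Real.exp (σ*y)) * y := by positivity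
  have term2 : Complex.abs ((Complex.sinh ((τ:ℂ)*(y:ℂ)*z) /
        (Complex.sinh (y:ℂ) * Complex.sinh ((τ:ℂ)*(y:ℂ)))) / (y:ℂ))
      ≤ (1/(δ * c₁ * c₂)) * Real.exp (-((1 + σ - σ*b) * y)) := by
    rw [map_div₀, map_div₀, hay, div_div]
    calc Complex.abs (Complex.sinh ((τ:ℂ)*(y:ℂ)*z)) /
          (Complex.abs (Complex.sinh (y:ℂ) * Complex.sinh ((τ:ℂ)*(y:ℂ))) * y)
        ≤ Real.exp (σ*b*y) / ((c₁ * Real.exp y) * (c₂ * Real.exp (σ*y)) * y) :=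
          div_le_div₀ (Real.exp_pos _).le hnum hdenpos hden
      _ ≤ Real.exp (σ*b*y) / ((c₁ * Real.exp y) * (c₂ * Real.exp (σ*y)) * δ) := by
          apply div_le_div_of_nonneg_left (Real.exp_pos _).le _ _
          · positivity
          · exact mul_le_mul_of_nonneg_left hy (by positivity)
      _ = (1/(δ * c₁ * c₂)) * Real.exp (-((1 + σ - σ*b) * y)) := by
          rw [show -((1 + σ - σ*b) * y) = σ*b*y - (y + σ*y) by ring, Real.exp_sub, Real.exp_add]
          field_simp
  linarith [term1, term2]

lemma hypDeriv_bound_infty {τ : ℝ} (hτ : τ < 0) {z : ℂ} {b δ y : ℝ}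
    (hb : |z.re| ≤ b) (hδ : 0 < δ) (hy : δ ≤ y) :
    Complex.abs (hypDeriv τ z y) ≤ 1 / y^2 +
      ((-τ)/(((1 - Real.exp (-(2*δ)))/2) * ((1 - Real.exp (-(2*(-τ*δ))))/2))) *
        Real.exp (-((1 + -τ - -τ*b) * y)) := by
  set σ := -τ with hσdef
  have hσ : 0 < σ := neg_pos.2 hτ
  have hy0 : 0 < y := lt_of_lt_of_le hδ hy
  have hb0 : 0 ≤ b := le_trans (abs_nonneg _) hb
  set c₁ := (1 - Real.exp (-(2*δ)))/2 with hc₁def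
  set c₂ := (1 - Real.exp (-(2*(σ*δ))))/2 with hc₂def
  have hc₁ : 0 < c₁ := by
    rw [hc₁def]
    have : Real.exp (-(2*δ)) < 1 := Real.exp_lt_one_iff.2 (by linarith)
    linarith
  have hc₂ : 0 < c₂ := by
    rw [hc₂def]
    have : Real.exp (-(2*(σ*δ))) < 1 := Real.exp_lt_one_iff.2 (by nlinarith)
    linarith
  have hS₁ : c₁ * Real.exp y ≤ Real.sinh y := sinh_lower hδ hy
  have hS₂ : c₂ * Real.exp (σ*y) ≤ |Real.sinh (τ*y)| := by
    rw [Real.abs_sinh]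
    have habs : |τ*y| = σ*y := by
      rw [abs_of_nonpos (mul_nonpos_iff.2 (Or.inr ⟨hτ.le, hy0.le⟩))]; ring
    rw [habs]
    exact sinh_lower (by positivity) (by nlinarith)
  have hsplit : hypDeriv τ z y = ((1:ℂ) / (y:ℂ)) / (y:ℂ) -
      ((τ:ℂ)*(y:ℂ)*Complex.cosh ((τ:ℂ)*(y:ℂ)*z) /
        (Complex.sinh (y:ℂ) * Complex.sinh ((τ:ℂ)*(y:ℂ)))) / (y:ℂ) := by
    rw [hypDeriv, sub_div]
  rw [hsplit]
  refine (Complex.abs.sub_le_add _ _).trans ?_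
  have hay : Complex.abs (y:ℂ) = y := by rw [Complex.abs_ofReal, abs_of_pos hy0]
  have term1 : Complex.abs (((1:ℂ) / (y:ℂ)) / (y:ℂ)) ≤ 1 / y^2 := by
    rw [map_div₀, map_div₀, hay, map_one, div_div, ← sq]
  have hre : ((τ:ℂ)*(y:ℂ)*z).re = (τ*y) * z.re := by
    rw [show ((τ:ℂ)*(y:ℂ)) = ((τ*y : ℝ):ℂ) by push_cast; ring, Complex.re_ofReal_mul]
  have habsτy : |τ*y| = σ*y := by
    rw [abs_of_nonpos (mul_nonpos_iff.2 (Or.inr ⟨hτ.le, hy0.le⟩))]; ring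
  have hnum : Complex.abs ((τ:ℂ)*(y:ℂ)*Complex.cosh ((τ:ℂ)*(y:ℂ)*z)) ≤ σ*y*Real.exp (σ*b*y) := by
    rw [map_mul, map_mul, Complex.abs_ofReal, Complex.abs_ofReal, abs_of_neg hτ, abs_of_pos hy0]
    have hcosh : Complex.abs (Complex.cosh ((τ:ℂ)*(y:ℂ)*z)) ≤ Real.exp (σ*b*y) := by
      refine (abs_cosh_le_exp _).trans ?_
      apply Real.exp_le_exp.2
      rw [hre, abs_mul, habsτy]
      calc σ*y*|z.re| ≤ σ*y*b := mul_le_mul_of_nonneg_left hb (by positivity)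
        _ = σ*b*y := by ring
    exact mul_le_mul_of_nonneg_left hcosh (by positivity)
  have hden : (c₁ * Real.exp y) * (c₂ * Real.exp (σ*y)) * y ≤
      Complex.abs (Complex.sinh (y:ℂ) * Complex.sinh ((τ:ℂ)*(y:ℂ))) * y := by
    apply mul_le_mul_of_nonneg_right _ hy0.le
    rw [map_mul, ← Complex.ofReal_sinh,
      show ((τ:ℂ)*(y:ℂ)) = ((τ*y : ℝ):ℂ) by push_cast; ring, ← Complex.ofReal_sinh,
      Complex.abs_ofReal, Complex.abs_ofReal,
      _root_.abs_of_nonneg (le_trans (by positivity : (0:ℝ) ≤ c₁ * Real.exp y) hS₁)]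
    exact mul_le_mul hS₁ hS₂ (by positivity) (by positivity)
  have hdenpos : 0 < (c₁ * Real.exp y) * (c₂ * Real.exp (σ*y)) * y := by positivity
  have term2 : Complex.abs (((τ:ℂ)*(y:ℂ)*Complex.cosh ((τ:ℂ)*(y:ℂ)*z) /
        (Complex.sinh (y:ℂ) * Complex.sinh ((τ:ℂ)*(y:ℂ)))) / (y:ℂ))
      ≤ (σ/(c₁ * c₂)) * Real.exp (-((1 + σ - σ*b) * y)) := by
    rw [map_div₀, map_div₀, hay, div_div]
    calc Complex.abs ((τ:ℂ)*(y:ℂ)*Complex.cosh ((τ:ℂ)*(y:ℂ)*z)) /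
          (Complex.abs (Complex.sinh (y:ℂ) * Complex.sinh ((τ:ℂ)*(y:ℂ))) * y)
        ≤ (σ*y*Real.exp (σ*b*y)) / ((c₁ * Real.exp y) * (c₂ * Real.exp (σ*y)) * y) :=
          div_le_div₀ (by positivity) hnum hdenpos hden
      _ = (σ/(c₁ * c₂)) * Real.exp (-((1 + σ - σ*b) * y)) := by
          rw [show -((1 + σ - σ*b) * y) = σ*b*y - (y + σ*y) by ring, Real.exp_sub, Real.exp_add]
          field_simp
  linarith [term1, term2]

lemma integrableOn_pieceBound {δ K C C₁ ε₀ : ℝ} (hδ : 0 < δ) (hε₀ : 0 < ε₀) :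
    IntegrableOn (fun y => if y ≤ δ then K else C/y^2 + C₁ * Real.exp (-(ε₀*y)))
      (Ioi (0:ℝ)) := by
  have hsplit : Ioi (0:ℝ) = Ioc 0 δ ∪ Ioi δ := (Ioc_union_Ioi_eq_Ioi hδ.le).symm
  rw [hsplit, integrableOn_union]
  constructor
  · apply IntegrableOn.congr_fun (f := fun _ => K)
    · exact integrableOn_const measure_Ioc_lt_top.ne
    · intro y hy
      simp only []
      rw [if_pos hy.2]
    · exact measurableSet_Ioc
  · apply IntegrableOn.congr_fun
      (f := fun y => C * y^(-2:ℝ) + C₁ * Real.exp (-ε₀*y))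
    · exact ((integrableOn_Ioi_rpow_of_lt (by norm_num) hδ).const_mul C).add
        ((exp_neg_integrableOn_Ioi δ hε₀).const_mul C₁)
    · intro y hy
      have hy0 : 0 < y := lt_trans hδ hy
      simp only []
      rw [if_neg (not_le.2 hy)]
      congr 1
      · rw [show (-2:ℝ) = -((2:ℕ):ℝ) by norm_num, Real.rpow_neg hy0.le, Real.rpow_natCast]
        rw [div_eq_mul_inv]
      · rw [neg_mul]
    · exact measurableSet_Ioi

lemma hyp_bound_exists {τ : ℝ} (hτ : τ < 0) {b R : ℝ} (hR0 : 0 ≤ R) (hb0 : 0 ≤ b)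
    (hb : b < 1 - τ⁻¹) :
    ∃ bnd : ℝ → ℝ, IntegrableOn bnd (Ioi (0:ℝ)) ∧
      ∀ y ∈ Ioi (0:ℝ), ∀ z : ℂ, |z.re| ≤ b → Complex.abs z ≤ R →
        Complex.abs (hypInt τ z y) ≤ bnd y ∧ Complex.abs (hypDeriv τ z y) ≤ bnd y := by
  have hσ : 0 < -τ := neg_pos.2 hτ
  set σ := -τ with hσdef
  have hA : 0 < σ * (R + 1) := by positivity
  set δ : ℝ := min 1 (σ * (R + 1))⁻¹ with hδdef
  have hδ : 0 < δ := lt_min one_pos (by positivity)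
  have hδ1 : δ ≤ 1 := min_le_left _ _
  have hδ2 : δ * (σ * (R + 1)) ≤ 1 := by
    have h1 : δ ≤ (σ * (R + 1))⁻¹ := min_le_right _ _
    have h2 := mul_le_mul_of_nonneg_right h1 hA.le
    rwa [inv_mul_cancel₀ hA.ne'] at h2
  set ε₀ : ℝ := 1 + σ - σ * b with hε₀def
  have hε₀ : 0 < ε₀ := by
    have hτinv : τ⁻¹ = -σ⁻¹ := by rw [hσdef]; field_simp
    rw [hτinv] at hb
    have : σ * b < σ * (1 + σ⁻¹) := mul_lt_mul_of_pos_left (by linarith) hσ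
    rw [mul_add, mul_inv_cancel₀ hσ.ne'] at this
    rw [hε₀def]; linarith
  set c₁ := (1 - Real.exp (-(2*δ)))/2 with hc₁def
  set c₂ := (1 - Real.exp (-(2*(σ*δ))))/2 with hc₂def
  have hc₁ : 0 < c₁ := by
    rw [hc₁def]
    have : Real.exp (-(2*δ)) < 1 := Real.exp_lt_one_iff.2 (by linarith)
    linarith
  have hc₂ : 0 < c₂ := by
    rw [hc₂def]
    have : Real.exp (-(2*(σ*δ))) < 1 := Real.exp_lt_one_iff.2 (by nlinarith)
    linarith
  set K : ℝ := (R * (2 * σ^3 + σ) + σ^3 * R^3) / σ + (2 * σ^3 + σ + σ^3 * R^2) / σ with hKdef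
  set C : ℝ := R + 1 with hCdef
  set C₁ : ℝ := 1/(δ * c₁ * c₂) + σ/(c₁ * c₂) with hC₁def
  refine ⟨fun y => if y ≤ δ then K else C/y^2 + C₁ * Real.exp (-(ε₀*y)),
    integrableOn_pieceBound hδ hε₀, ?_⟩
  intro y hy z hzb hzR
  have hy0 : 0 < y := hy
  simp only []
  by_cases hcase : y ≤ δ
  · rw [if_pos hcase]
    have hy1 : y ≤ 1 := le_trans hcase hδ1
    have hy2 : σ * (y * (R + 1)) ≤ 1 := by
      calc σ * (y * (R + 1)) ≤ σ * (δ * (R + 1)) := by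
            apply mul_le_mul_of_nonneg_left _ hσ.le
            exact mul_le_mul_of_nonneg_right hcase (by linarith)
        _ = δ * (σ * (R + 1)) := by ring
        _ ≤ 1 := hδ2
    have t1 := hypInt_bound_zero hτ hzR hy0 hy1 hy2
    have t2 := hypDeriv_bound_zero hτ hzR hy0 hy1 hy2
    rw [← hσdef] at t1 t2
    have pos1 : 0 ≤ (R * (2 * σ^3 + σ) + σ^3 * R^3) / σ := by positivity
    have pos2 : 0 ≤ (2 * σ^3 + σ + σ^3 * R^2) / σ := by positivity
    exact ⟨t1.trans (by rw [hKdef]; linarith), t2.trans (by rw [hKdef]; linarith)⟩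
  · rw [if_neg hcase]
    push_neg at hcase
    have t1 := hypInt_bound_infty (b := b) (R := R) hτ hzb hzR hδ hcase.le
    have t2 := hypDeriv_bound_infty (b := b) hτ hzb hδ hcase.le
    rw [← hσdef] at t1 t2
    rw [← hc₁def, ← hc₂def, show (1 + σ - σ*b) = ε₀ from hε₀def.symm] at t1 t2
    have hy2pos : (0:ℝ) < y^2 := by positivity
    have hexp : (0:ℝ) < Real.exp (-(ε₀*y)) := Real.exp_pos _
    constructor
    · refine t1.trans ?_
      have h1 : R / y^2 ≤ C / y^2 := by
        gcongr
        rw [hCdef]; linarith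
      have h2 : (1/(δ * c₁ * c₂)) * Real.exp (-(ε₀*y)) ≤ C₁ * Real.exp (-(ε₀*y)) := by
        apply mul_le_mul_of_nonneg_right _ hexp.le
        rw [hC₁def]
        have : 0 ≤ σ/(c₁ * c₂) := by positivity
        linarith
      linarith
    · refine t2.trans ?_
      have h1 : 1 / y^2 ≤ C / y^2 := by
        gcongr
        rw [hCdef]; linarith
      have h2 : (σ/(c₁ * c₂)) * Real.exp (-(ε₀*y)) ≤ C₁ * Real.exp (-(ε₀*y)) := by
        apply mul_le_mul_of_nonneg_right _ hexp.le
        rw [hC₁def]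
        have : 0 ≤ 1/(δ * c₁ * c₂) := by positivity
        linarith
      linarith


/-- For `τ < 0` and `|Re z| < 1 − τ⁻¹` the integrand of the hyperbolic gamma function
is absolutely integrable on `(0,∞)`, so that `γ_τ(z)` is well defined, and
`G_τ(z) = exp(i·γ_τ(z))` is analytic on the strip `{z : |Re z| < 1 − τ⁻¹}`. -/
theorem hyperbolic_gamma_integrable_and_analytic (τ : ℝ) (hτ : τ < 0) :
    (∀ z : ℂ, |z.re| < 1 - τ⁻¹ →
      MeasureTheory.IntegrableOn (hypInt τ z) (Set.Ioi (0 : ℝ))) ∧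
    AnalyticOnNhd ℂ (hypGammaStrip τ) {z : ℂ | |z.re| < 1 - τ⁻¹} := by
  have hint : ∀ z : ℂ, |z.re| < 1 - τ⁻¹ →
      MeasureTheory.IntegrableOn (hypInt τ z) (Set.Ioi (0 : ℝ)) := by
    intro z hz
    obtain ⟨bnd, hbnd_int, hbnd⟩ := hyp_bound_exists hτ (Complex.abs.nonneg z)
      (abs_nonneg z.re) hz
    apply Integrable.mono' hbnd_int
      ((contOn_hypInt τ z hτ.ne).aestronglyMeasurable measurableSet_Ioi)
    refine (ae_restrict_iff' measurableSet_Ioi).2 (Filter.Eventually.of_forall ?_)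
    intro y hy
    rw [Complex.norm_eq_abs]
    exact (hbnd y hy z le_rfl le_rfl).1
  refine ⟨hint, ?_⟩
  have hopen : IsOpen {z : ℂ | |z.re| < 1 - τ⁻¹} :=
    isOpen_lt (continuous_abs.comp Complex.continuous_re) continuous_const
  apply DifferentiableOn.analyticOnNhd _ hopen
  intro z₀ hz₀
  simp only [mem_setOf_eq] at hz₀
  set ε : ℝ := (1 - τ⁻¹ - |z₀.re|)/2 with hεdef
  have hε : 0 < ε := by rw [hεdef]; linarith
  set b : ℝ := |z₀.re| + ε with hbdef
  have hb : b < 1 - τ⁻¹ := by rw [hbdef, hεdef]; linarith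
  have hb0 : 0 ≤ b := by positivity
  set R : ℝ := Complex.abs z₀ + ε with hRdef
  have hR0 : 0 ≤ R := by positivity
  obtain ⟨bnd, hbnd_int, hbnd⟩ := hyp_bound_exists hτ hR0 hb0 hb
  have hball : ∀ z ∈ Metric.ball z₀ ε, |z.re| ≤ b ∧ Complex.abs z ≤ R := by
    intro z hzb
    rw [Metric.mem_ball, Complex.dist_eq, Complex.norm_eq_abs] at hzb
    constructor
    · have h1 : |z.re - z₀.re| ≤ Complex.abs (z - z₀) := by
        simpa [Complex.sub_re] using Complex.abs_re_le_abs (z - z₀)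
      rw [hbdef]
      have : |z.re| ≤ |z₀.re| + |z.re - z₀.re| := by
        calc |z.re| = |z₀.re + (z.re - z₀.re)| := by ring_nf
          _ ≤ |z₀.re| + |z.re - z₀.re| := abs_add_le _ _
      linarith [hzb.le, h1]
    · rw [hRdef]
      calc Complex.abs z = Complex.abs (z₀ + (z - z₀)) := by ring_nf
        _ ≤ Complex.abs z₀ + Complex.abs (z - z₀) := Complex.abs.add_le _ _
        _ ≤ Complex.abs z₀ + ε := by linarith [hzb.le]
  have key := hasDerivAt_integral_of_dominated_loc_of_deriv_le
    (μ := volume.restrict (Ioi (0:ℝ))) (F := fun z y => hypInt τ z y)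
    (F' := fun z y => hypDeriv τ z y) (x₀ := z₀) (bound := bnd) (Metric.ball_mem_nhds z₀ hε)
    (Filter.Eventually.of_forall fun z =>
      (contOn_hypInt τ z hτ.ne).aestronglyMeasurable measurableSet_Ioi)
    (hint z₀ hz₀)
    ((contOn_hypDeriv τ z₀ hτ.ne).aestronglyMeasurable measurableSet_Ioi)
    ((ae_restrict_iff' measurableSet_Ioi).2 (Filter.Eventually.of_forall fun y hy => by
      intro z hz
      rw [Complex.norm_eq_abs]
      exact (hbnd y hy z (hball z hz).1 (hball z hz).2).2))
    hbnd_int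
    (Filter.Eventually.of_forall fun y => fun z _ => hypInt_hasDerivAt τ z y)
  obtain ⟨-, hder⟩ := key
  have h1 : DifferentiableAt ℂ (fun z => hypGammaArg τ z) z₀ := by
    have := (hder.differentiableAt).const_mul ((2 * Complex.I)⁻¹)
    simpa [hypGammaArg] using this
  exact ((h1.const_mul Complex.I).cexp).differentiableWithinAt
end
end

section
/- Let τ ∈ ℝ_{<0}. For every z ∈ ℂ with |Re(z)| < 1 − τ^{-1} one has the reflection identity G_τ(−z)·G_τ(z) = 1 and the modularity identity G_τ(z) = G_{τ^{-1}}(−τz) (note that τ^{-1} ∈ ℝ_{<0} and |Re(−τz)| < 1 − τ, so the right-hand side is defined). -/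
noncomputable section

open Complex MeasureTheory Set

/-- Reflection equation `G_τ(−z)·G_τ(z) = 1` and modularity `G_τ(z) = G_{τ⁻¹}(−τz)`
for the hyperbolic gamma function on the strip `|Re z| < 1 − τ⁻¹`. -/
theorem hyperbolic_gamma_reflection_and_modularity (τ : ℝ) (hτ : τ < 0) (z : ℂ)
    (hz : |z.re| < 1 - τ⁻¹) :
    hypGammaStrip τ (-z) * hypGammaStrip τ z = 1 ∧
    hypGammaStrip τ z = hypGammaStrip τ⁻¹ (-(τ : ℂ) * z) := by
  have hτ0 : (τ : ℝ) ≠ 0 := hτ.ne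
  have hτC : (τ : ℂ) ≠ 0 := by exact_mod_cast hτ0
  constructor
  · -- reflection
    have hneg : ∀ y : ℝ, hypInt τ (-z) y = -hypInt τ z y := by
      intro y
      simp only [hypInt]
      rw [show (τ : ℂ) * y * (-z) = -((τ : ℂ) * y * z) by ring, Complex.sinh_neg]
      ring
    have hA : hypGammaArg τ (-z) = -hypGammaArg τ z := by
      unfold hypGammaArg
      simp only [hneg, integral_neg]
      ring
    rw [hypGammaStrip, hypGammaStrip, hA, ← Complex.exp_add,
      show Complex.I * -hypGammaArg τ z + Complex.I * hypGammaArg τ z = 0 by ring,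
      Complex.exp_zero]
  · -- modularity
    have hb : (0 : ℝ) < -τ := by linarith
    have key : ∀ u : ℝ, hypInt τ⁻¹ (-(τ : ℂ) * z) (-τ * u) = (-τ)⁻¹ • hypInt τ z u := by
      intro u
      by_cases hu : u = 0
      · simp [hypInt, hu]
      · have huC : (u : ℂ) ≠ 0 := by exact_mod_cast hu
        simp only [hypInt]
        push_cast
        rw [show (τ : ℂ)⁻¹ * (-(τ : ℂ) * (u : ℂ)) * (-(τ : ℂ) * z) = (τ : ℂ) * u * z by
              field_simp,
            show (τ : ℂ)⁻¹ * (-(τ : ℂ) * (u : ℂ)) = -(u : ℂ) by field_simp,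
            Complex.sinh_neg]
        rw [Complex.real_smul]
        push_cast
        simp only [neg_mul, Complex.sinh_neg]
        field_simp
    have hint : (∫ y in Ioi (0 : ℝ), hypInt τ⁻¹ (-(τ : ℂ) * z) y) =
        ∫ y in Ioi (0 : ℝ), hypInt τ z y := by
      have h1 := integral_comp_mul_left_Ioi (hypInt τ⁻¹ (-(τ : ℂ) * z)) 0 hb
      rw [mul_zero] at h1
      simp only [key] at h1
      rw [integral_smul] at h1
      have hne : ((-τ)⁻¹ : ℝ) ≠ 0 := inv_ne_zero (ne_of_gt hb)
      exact (smul_right_injective ℂ hne h1).symm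
    rw [hypGammaStrip, hypGammaStrip, hypGammaArg, hypGammaArg, hint]
end
end
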